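/- Let C be an unlabeled chain and let e be a navigational expression built only from ∅, id, the edge label, composition, union, transitive closure, intersection, and difference. Then either the identity relation on nodes(C) is contained in the evaluation of e on C, or the evaluation of e on C contains no pair of the form (m,m). -/

import Mathlib

/-- An unlabeled tree. -/
structure DTree (V : Type) where
  E : V → V → Prop
  acyclic : ∀ v, ¬ Relation.TransGen E v v
  root : V
  root_no_in : ∀ m, ¬ E m root
  in_unique : ∀ n, n ≠ root → ∃! m, E m n

/-- A chain: a tree in which every node has at most one child. -/
structure DChain (V : Type) extends DTree V where
  at_most_one_child : ∀ m n n', E m n → E m n' → n = n'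

/-- Navigational expressions over a single edge relation: ∅, id, the edge
label, composition, union, transitive closure, intersection, difference. -/
inductive UExpr : Type
  | empty : UExpr
  | id : UExpr
  | edge : UExpr
  | comp (e₁ e₂ : UExpr) : UExpr
  | union (e₁ e₂ : UExpr) : UExpr
  | tc (e : UExpr) : UExpr
  | inter (e₁ e₂ : UExpr) : UExpr
  | diff (e₁ e₂ : UExpr) : UExpr

/-- Evaluation of an expression on an unlabeled graph. -/
def UExpr.eval {V : Type} (E : V → V → Prop) : UExpr → V → V → Prop
  | .empty => fun _ _ => False
  | .id => fun m n => m = n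
  | .edge => E
  | .comp e₁ e₂ => Relation.Comp (e₁.eval E) (e₂.eval E)
  | .union e₁ e₂ => fun m n => e₁.eval E m n ∨ e₂.eval E m n
  | .tc e => Relation.TransGen (e.eval E)
  | .inter e₁ e₂ => fun m n => e₁.eval E m n ∧ e₂.eval E m n
  | .diff e₁ e₂ => fun m n => e₁.eval E m n ∧ ¬ e₂.eval E m n

-- `steps E k m n` : `n` is reached from `m` in exactly `k` `E`-steps.
def steps {V : Type} (E : V → V → Prop) : ℕ → V → V → Prop
  | 0 => fun m n => m = n
  | k+1 => fun m n => ∃ p, E m p ∧ steps E k p n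

lemma steps_add {V : Type} (E : V → V → Prop) (a b : ℕ) (m n : V) :
    steps E (a + b) m n ↔ ∃ p, steps E a m p ∧ steps E b p n := by
  induction a generalizing m with
  | zero =>
    simp only [Nat.zero_add, steps]
    exact ⟨fun h => ⟨m, rfl, h⟩, fun ⟨p, hp, h⟩ => hp ▸ h⟩
  | succ a ih =>
    rw [Nat.succ_add]
    constructor
    · rintro ⟨q, hq, hs⟩
      obtain ⟨p, h1, h2⟩ := (ih q).1 hs
      exact ⟨p, ⟨q, hq, h1⟩, h2⟩
    · rintro ⟨p, ⟨q, hq, h1⟩, h2⟩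
      exact ⟨q, hq, (ih q).2 ⟨p, h1, h2⟩⟩

lemma steps_transGen {V : Type} (E : V → V → Prop) :
    ∀ (k : ℕ) (m n : V), steps E (k + 1) m n → Relation.TransGen E m n := by
  intro k
  induction k with
  | zero => rintro m n ⟨p, hp, hs⟩; cases hs; exact Relation.TransGen.single hp
  | succ k ih =>
    rintro m n ⟨p, hp, hs⟩
    exact Relation.TransGen.head hp (ih p n hs)

lemma steps_det {V : Type} (C : DChain V) :
    ∀ (k : ℕ) (m n n' : V), steps C.E k m n → steps C.E k m n' → n = n' := by
  intro k
  induction k with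
  | zero => intro m n n' h h'; exact h ▸ h'
  | succ k ih =>
    rintro m n n' ⟨p, hp, hs⟩ ⟨p', hp', hs'⟩
    obtain rfl := C.at_most_one_child m p p' hp hp'
    exact ih p n n' hs hs'

lemma steps_unique {V : Type} (C : DChain V) (k k' : ℕ) (m n : V)
    (h : steps C.E k m n) (h' : steps C.E k' m n) : k = k' := by
  -- wlog k ≤ k'
  have key : ∀ a b : ℕ, a ≤ b → steps C.E a m n → steps C.E b m n → a = b := by
    intro a b hab ha hb
    obtain ⟨d, rfl⟩ := Nat.exists_eq_add_of_le hab
    obtain ⟨p, h1, h2⟩ := (steps_add C.E a d m n).1 hb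
    obtain rfl := steps_det C a m n p ha h1
    cases d with
    | zero => rfl
    | succ d => exact absurd (steps_transGen C.E d n n h2) (C.acyclic n)
  rcases le_total k k' with hle | hle
  · exact key k k' hle h h'
  · exact (key k' k hle h' h).symm

lemma sum_steps_transGen {V : Type} (E : V → V → Prop) (R : V → V → Prop)
    (S : Set ℕ) (hR : ∀ (k : ℕ) (m n : V), k ∈ S → steps E k m n → R m n) :
    ∀ (l : List ℕ), l ≠ [] → (∀ x ∈ l, x ∈ S) → ∀ m n, steps E l.sum m n →
      Relation.TransGen R m n := by
  intro l
  induction l with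
  | nil => intro h; exact absurd rfl h
  | cons a l ih =>
    intro _ hmem m n hs
    rw [List.sum_cons] at hs
    obtain ⟨p, h1, h2⟩ := (steps_add E a l.sum m n).1 hs
    have hRm : R m p := hR a m p (hmem a (List.mem_cons_self (a := a) (l := l))) h1
    cases l with
    | nil =>
      cases h2
      exact Relation.TransGen.single hRm
    | cons b l' =>
      exact Relation.TransGen.head hRm
        (ih (by simp) (fun x hx => hmem x (List.mem_cons_of_mem a hx)) p n h2)

lemma eval_char {V : Type} (C : DChain V) (e : UExpr) :
    ∃ S : Set ℕ, ∀ m n, e.eval C.E m n ↔ ∃ k ∈ S, steps C.E k m n := by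
  induction e with
  | empty => exact ⟨∅, by simp [UExpr.eval]⟩
  | id =>
    refine ⟨{0}, fun m n => ?_⟩
    simp only [UExpr.eval, Set.mem_singleton_iff]
    constructor
    · rintro rfl; exact ⟨0, rfl, rfl⟩
    · rintro ⟨k, rfl, hs⟩; exact hs
  | edge =>
    refine ⟨{1}, fun m n => ?_⟩
    simp only [UExpr.eval, Set.mem_singleton_iff]
    constructor
    · intro h; exact ⟨1, rfl, n, h, rfl⟩
    · rintro ⟨k, rfl, p, hp, hs⟩; cases hs; exact hp
  | comp e₁ e₂ ih₁ ih₂ =>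
    obtain ⟨S₁, h₁⟩ := ih₁; obtain ⟨S₂, h₂⟩ := ih₂
    refine ⟨{k | ∃ a ∈ S₁, ∃ b ∈ S₂, a + b = k}, fun m n => ?_⟩
    constructor
    · rintro ⟨p, hp, hq⟩
      obtain ⟨a, ha, hsa⟩ := (h₁ m p).1 hp
      obtain ⟨b, hb, hsb⟩ := (h₂ p n).1 hq
      exact ⟨a + b, ⟨a, ha, b, hb, rfl⟩, (steps_add _ a b m n).2 ⟨p, hsa, hsb⟩⟩
    · rintro ⟨k, ⟨a, ha, b, hb, rfl⟩, hs⟩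
      obtain ⟨p, hsa, hsb⟩ := (steps_add _ a b m n).1 hs
      exact ⟨p, (h₁ m p).2 ⟨a, ha, hsa⟩, (h₂ p n).2 ⟨b, hb, hsb⟩⟩
  | union e₁ e₂ ih₁ ih₂ =>
    obtain ⟨S₁, h₁⟩ := ih₁; obtain ⟨S₂, h₂⟩ := ih₂
    refine ⟨S₁ ∪ S₂, fun m n => ?_⟩
    constructor
    · rintro (h | h)
      · obtain ⟨k, hk, hs⟩ := (h₁ m n).1 h; exact ⟨k, Or.inl hk, hs⟩
      · obtain ⟨k, hk, hs⟩ := (h₂ m n).1 h; exact ⟨k, Or.inr hk, hs⟩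
    · rintro ⟨k, hk | hk, hs⟩
      · exact Or.inl ((h₁ m n).2 ⟨k, hk, hs⟩)
      · exact Or.inr ((h₂ m n).2 ⟨k, hk, hs⟩)
  | tc e ih =>
    obtain ⟨S, h⟩ := ih
    refine ⟨{k | ∃ l : List ℕ, l ≠ [] ∧ (∀ x ∈ l, x ∈ S) ∧ l.sum = k}, fun m n => ?_⟩
    constructor
    · intro ht
      induction ht with
      | single h' =>
        obtain ⟨k, hk, hs⟩ := (h _ _).1 h'
        exact ⟨k, ⟨[k], by simp, by simpa using hk, by simp⟩, hs⟩
      | tail _ h' ihh =>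
        obtain ⟨k, ⟨l, hl, hls, hsum⟩, hs⟩ := ihh
        obtain ⟨j, hj, hsj⟩ := (h _ _).1 h'
        refine ⟨k + j, ⟨l ++ [j], by simp [hl], ?_, by simp [hsum]⟩,
          (steps_add _ k j m _).2 ⟨_, hs, hsj⟩⟩
        intro x hx
        rcases List.mem_append.1 hx with hx | hx
        · exact hls x hx
        · simp at hx; exact hx ▸ hj
    · rintro ⟨k, ⟨l, hl, hls, rfl⟩, hs⟩
      exact sum_steps_transGen C.E _ S
        (fun k m n hk hsk => (h m n).2 ⟨k, hk, hsk⟩) l hl hls m n hs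
  | inter e₁ e₂ ih₁ ih₂ =>
    obtain ⟨S₁, h₁⟩ := ih₁; obtain ⟨S₂, h₂⟩ := ih₂
    refine ⟨S₁ ∩ S₂, fun m n => ?_⟩
    constructor
    · rintro ⟨ha, hb⟩
      obtain ⟨k, hk, hs⟩ := (h₁ m n).1 ha
      obtain ⟨k', hk', hs'⟩ := (h₂ m n).1 hb
      obtain rfl := steps_unique C k k' m n hs hs'
      exact ⟨k, ⟨hk, hk'⟩, hs⟩
    · rintro ⟨k, ⟨hk1, hk2⟩, hs⟩
      exact ⟨(h₁ m n).2 ⟨k, hk1, hs⟩, (h₂ m n).2 ⟨k, hk2, hs⟩⟩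
  | diff e₁ e₂ ih₁ ih₂ =>
    obtain ⟨S₁, h₁⟩ := ih₁; obtain ⟨S₂, h₂⟩ := ih₂
    refine ⟨S₁ \ S₂, fun m n => ?_⟩
    constructor
    · rintro ⟨ha, hb⟩
      obtain ⟨k, hk, hs⟩ := (h₁ m n).1 ha
      refine ⟨k, ⟨hk, fun hk2 => hb ((h₂ m n).2 ⟨k, hk2, hs⟩)⟩, hs⟩
    · rintro ⟨k, ⟨hk1, hk2⟩, hs⟩
      refine ⟨(h₁ m n).2 ⟨k, hk1, hs⟩, fun hb => ?_⟩
      obtain ⟨k', hk', hs'⟩ := (h₂ m n).1 hb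
      obtain rfl := steps_unique C k k' m n hs hs'
      exact hk2 hk'

/-- On an unlabeled chain, the evaluation of any expression in this
language either contains the whole identity relation, or contains no
pair of the form (m, m). -/
theorem stmt5 (V : Type) [Fintype V] (C : DChain V) (e : UExpr) :
    (∀ m : V, e.eval C.E m m) ∨ (∀ m : V, ¬ e.eval C.E m m) := by
  obtain ⟨S, h⟩ := eval_char C e
  by_cases h0 : 0 ∈ S
  · left
    intro m
    exact (h m m).2 ⟨0, h0, rfl⟩
  · right
    intro m hm
    obtain ⟨k, hk, hs⟩ := (h m m).1 hm
    obtain rfl := steps_unique C k 0 m m hs rfl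
    exact h0 hk
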